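/- arXiv:2310.18135 — 5 statements merged into one kernel-verified Lean document; each statement's English description precedes it below -/
import Mathlib

section
/- If R is a zero-sum-free commutative semiring and p ∈ D_R(U) is a distribution with p(u₀) = 1 for some u₀ (i.e., p is supported by a delta somewhere in a convex combination sense), then for any convex decomposition p = Σ_r d(r)·δ^{r} over elements r with weights d(r) summing to 1, every r with d(r) ≠ 0 satisfies r = u₀. Equivalently: if Σ_r d(r)·δ^{s(r)} equals the delta distribution at u₀, then s(r) = u₀ whenever d(r) ≠ 0. -/
lemma zsf_finset_sum {R : Type*} [AddCommMonoid R]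
    (hzsf : ∀ a b : R, a + b = 0 → a = 0 ∧ b = 0)
    {ι : Type*} (t : Finset ι) (f : ι → R) (h : ∑ j ∈ t, f j = 0) :
    ∀ j ∈ t, f j = 0 := by
  classical
  induction t using Finset.induction_on with
  | empty => simp
  | insert a tset hj ih =>
    rw [Finset.sum_insert hj] at h
    obtain ⟨h1, h2⟩ := hzsf _ _ h
    intro j hjmem
    rcases Finset.mem_insert.mp hjmem with rfl | hmem
    · exact h1
    · exact ih h2 j hmem

/-- In a zero-sum-free commutative semiring `R`: if a convex combination
`∑_i d(i) · δ^{s(i)}` of delta distributions (with weights `d` summing to `1`)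
equals the delta distribution at `u₀`, then every `i` with nonzero weight
satisfies `s i = u₀`. -/
theorem stmt3 (R ι U : Type*) [CommSemiring R]
    (hzsf : ∀ a b : R, a + b = 0 → a = 0 ∧ b = 0)
    (d : ι →₀ R) (hd : d.sum (fun _ r => r) = 1)
    (s : ι → U) (u₀ : U)
    (h : Finsupp.mapDomain s d = Finsupp.single u₀ 1) :
    ∀ i : ι, d i ≠ 0 → s i = u₀ := by
  classical
  intro i hi
  by_contra hne
  have h0 : (Finsupp.mapDomain s d) (s i) = 0 := by
    rw [h, Finsupp.single_apply, if_neg (fun e => hne e.symm)]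
  have hsum : ∑ j ∈ d.support, (Finsupp.single (s j) (d j)) (s i) = 0 := by
    rw [← Finsupp.finset_sum_apply]
    simpa [Finsupp.mapDomain, Finsupp.sum] using h0
  have hmem : i ∈ d.support := Finsupp.mem_support_iff.mpr hi
  have := zsf_finset_sum hzsf _ _ hsum i hmem
  rw [Finsupp.single_apply, if_pos rfl] at this
  exact hi this
end

section
/- Let X and Y be simplicial G-sets with trivial G-action on Y. If p : X → D_R(Y) is a G-equivariant simplicial distribution and p is non-contextual in the G-equivariant sense (i.e., lies in the image of Θ_G : D_R(dDist_G(X,Y)) → sDist_G(X,Y)), then the induced simplicial distribution p̃_G : X⫽G → D_R(Y) on the Borel construction is non-contextual; conversely if p̃_G is non-contextual then p is G-equivariantly non-contextual. -/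
open CategoryTheory Simplicial Opposite

/-- `R`-distributions on `U`. -/
def DistR (R : Type) [CommSemiring R] (U : Type*) : Type _ :=
  {p : U →₀ R // p.sum (fun _ r => r) = 1}

noncomputable def DistR.map {R : Type} [CommSemiring R] {U V : Type*}
    (f : U → V) (p : DistR R U) : DistR R V :=
  ⟨Finsupp.mapDomain f p.1,
    (Finsupp.sum_mapDomain_index (fun _ => rfl) (fun _ _ _ => rfl)).trans p.2⟩

theorem DistR.map_id {R : Type} [CommSemiring R] {U : Type*} (p : DistR R U) :
    DistR.map id p = p := by
  apply Subtype.ext; exact Finsupp.mapDomain_id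

theorem DistR.map_comp {R : Type} [CommSemiring R] {U V W : Type*} (f : U → V) (g : V → W)
    (p : DistR R U) : DistR.map (g ∘ f) p = DistR.map g (DistR.map f p) := by
  apply Subtype.ext; exact Finsupp.mapDomain_comp

/-- The simplicial set of `R`-distributions on a simplicial set `Y`. -/
noncomputable def DRobj (R : Type) [CommSemiring R] (Y : SSet.{0}) : SSet.{0} where
  obj n := DistR R (Y.obj n)
  map θ := TypeCat.ofHom (fun p => DistR.map (Y.map θ) p)
  map_id n := by
    ext p
    show DistR.map (Y.map (𝟙 n)) p = p
    rw [Y.map_id]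
    exact DistR.map_id p
  map_comp θ θ' := by
    ext p
    have : DistR.map ((_root_.id Y).map (θ ≫ θ')) p
        = DistR.map (Y.map θ' ∘ Y.map θ) p := by
      congr 1
      ext x
      simp
    simpa using this.trans (DistR.map_comp _ _ p)

/-- The unit `δ : Y → D_R(Y)`, sending a simplex to the delta distribution at it. -/
noncomputable def deltaNat (R : Type) [CommSemiring R] (Y : SSet.{0}) :
    Y ⟶ DRobj R Y where
  app n := TypeCat.ofHom (fun y => ⟨Finsupp.single y 1, by rw [Finsupp.sum_single_index rfl]⟩)
  naturality n m θ := by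
    ext y
    refine Subtype.ext ?_
    show Finsupp.single (Y.map θ y) 1 = Finsupp.mapDomain (Y.map θ) (Finsupp.single y 1)
    exact Finsupp.mapDomain_single.symm

/-- `Θ`: a distribution on the set of simplicial maps `X → Y` yields a simplicial
distribution `X → D_R(Y)`. -/
noncomputable def Theta (R : Type) [CommSemiring R] (X Y : SSet.{0})
    (d : DistR R (X ⟶ Y)) : X ⟶ DRobj R Y where
  app n := TypeCat.ofHom (fun σ => DistR.map (fun s : X ⟶ Y => s.app n σ) d)
  naturality n m θ := by
    ext σ
    apply Subtype.ext
    show Finsupp.mapDomain (fun s : X ⟶ Y => s.app m (X.map θ σ)) d.1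
      = Finsupp.mapDomain (Y.map θ) (Finsupp.mapDomain (fun s : X ⟶ Y => s.app n σ) d.1)
    rw [← Finsupp.mapDomain_comp]
    congr 1
    funext s
    exact (ConcreteCategory.congr_hom (s.naturality θ) σ)

/-- A (left) action of a group `G` on a simplicial set `X` by simplicial automorphisms. -/
structure SAct (G : Type) [Group G] (X : SSet.{0}) where
  act : G → ∀ n : SimplexCategoryᵒᵖ, X.obj n → X.obj n
  one : ∀ n x, act 1 n x = x
  mul : ∀ g h n x, act (g * h) n x = act g n (act h n x)
  nat : ∀ g {n m : SimplexCategoryᵒᵖ} (θ : n ⟶ m) x,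
      X.map θ (act g n x) = act g m (X.map θ x)

variable {G : Type} [Group G] {X : SSet.{0}}

/-- The relation defining the SBorel construction: `(f, x) ∼ g·(f, x)`. -/
def sBorelRel (A : SAct G X) (n : SimplexCategoryᵒᵖ) :
    ((Fin (n.unop.len + 1) → G) × X.obj n) → ((Fin (n.unop.len + 1) → G) × X.obj n) → Prop :=
  fun a b => ∃ g : G, (fun i => g * a.1 i) = b.1 ∧ A.act g n a.2 = b.2

/-- The SBorel construction `X ⫽ G = EG ×_G X`. -/
def SBorel (A : SAct G X) : SSet.{0} where
  obj n := Quot (sBorelRel A n)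
  map {n m} θ := TypeCat.ofHom (Quot.map
    (fun (a : (Fin (n.unop.len + 1) → G) × X.obj n) => (a.1 ∘ θ.unop.toOrderHom, X.map θ a.2))
    (by
      rintro ⟨f, x⟩ ⟨f', x'⟩ ⟨g, hf, hx⟩
      dsimp at hf hx ⊢
      subst hf; subst hx
      exact ⟨g, rfl, (A.nat g θ x).symm⟩))
  map_id n := by
    ext q
    induction q using Quot.ind with
    | _ a =>
      show Quot.mk _ _ = Quot.mk _ a
      congr 1
      refine Prod.ext ?_ ?_
      · funext i
        exact congrArg a.1 (congrFun (congrArg _ (SimplexCategory.id_toOrderHom n.unop)) i)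
      · exact ConcreteCategory.congr_hom (X.map_id n) a.2
  map_comp θ θ' := by
    ext q
    induction q using Quot.ind with
    | _ a =>
      show Quot.mk _ _ = Quot.mk _ _
      congr 1
      refine Prod.ext ?_ ?_
      · funext i
        exact congrArg a.1
          (congrFun (congrArg _ (SimplexCategory.comp_toOrderHom θ'.unop θ.unop)) i)
      · exact ConcreteCategory.congr_hom (X.map_comp θ θ') a.2

/-- The simplicial distribution on the Borel construction induced by a `G`-equivariant
simplicial distribution `p : X → D_R(Y)` (with trivial action on `Y`). -/
noncomputable def tildeDist (R : Type) [CommSemiring R] {Y : SSet.{0}} (A : SAct G X)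
    (p : X ⟶ DRobj R Y)
    (hp : ∀ (g : G) (n : SimplexCategoryᵒᵖ) (x : X.obj n), p.app n (A.act g n x) = p.app n x) :
    SBorel A ⟶ DRobj R Y where
  app n := TypeCat.ofHom (Quot.lift
    (fun (a : (Fin (n.unop.len + 1) → G) × X.obj n) => p.app n a.2) (by
    rintro ⟨f, x⟩ ⟨f', x'⟩ ⟨g, hf, hx⟩
    dsimp at hx ⊢
    rw [← hx, hp]))
  naturality n m θ := by
    ext q
    induction q using Quot.ind with
    | _ a => exact ConcreteCategory.congr_hom (p.naturality θ) a.2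

/-- The map `X ⫽ G → Y` induced by a `G`-equivariant simplicial map `s : X → Y`
(with trivial action on `Y`). -/
def tildeMap {Y : SSet.{0}} (A : SAct G X) (s : X ⟶ Y)
    (hs : ∀ (g : G) (n : SimplexCategoryᵒᵖ) (x : X.obj n), s.app n (A.act g n x) = s.app n x) :
    SBorel A ⟶ Y where
  app n := TypeCat.ofHom (Quot.lift
    (fun (a : (Fin (n.unop.len + 1) → G) × X.obj n) => s.app n a.2) (by
    rintro ⟨f, x⟩ ⟨f', x'⟩ ⟨g, hf, hx⟩
    dsimp at hx ⊢
    rw [← hx, hs]))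
  naturality n m θ := by
    ext q
    induction q using Quot.ind with
    | _ a => exact ConcreteCategory.congr_hom (s.naturality θ) a.2


section AuxStmt6

variable {R : Type} [CommSemiring R]

lemma zsf_sum_eq_zero (hzsf : ∀ a b : R, a + b = 0 → a = 0 ∧ b = 0)
    {α : Type*} (s : Finset α) (f : α → R) (h : ∑ a ∈ s, f a = 0) :
    ∀ a ∈ s, f a = 0 := by
  induction s using Finset.cons_induction with
  | empty => simp
  | cons a s ha ih =>
    rw [Finset.sum_cons] at h
    obtain ⟨h1, h2⟩ := hzsf _ _ h
    intro b hb
    rcases Finset.mem_cons.mp hb with rfl | hb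
    · exact h1
    · exact ih h2 b hb

lemma zsf_mapDomain_ne_zero (hzsf : ∀ a b : R, a + b = 0 → a = 0 ∧ b = 0)
    {U V : Type*} (f : U → V) (p : U →₀ R) (t : U) (ht : p t ≠ 0) :
    Finsupp.mapDomain f p (f t) ≠ 0 := by
  classical
  intro h0
  rw [Finsupp.mapDomain, Finsupp.sum_apply, Finsupp.sum] at h0
  have := zsf_sum_eq_zero hzsf _ _ h0 t (Finsupp.mem_support_iff.mpr ht)
  rw [Finsupp.single_apply, if_pos rfl] at this
  exact ht this

/-- The canonical simplicial map `X → X ⫽ G`, `x ↦ [(const 1, x)]`. -/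
def iotaB (A : SAct G X) : X ⟶ SBorel A where
  app n := TypeCat.ofHom (fun x => Quot.mk _ (fun _ => 1, x))
  naturality n m θ := rfl

section Converse

variable {Y : SSet.{0}} (A : SAct G X)
  (hzsf : ∀ a b : R, a + b = 0 → a = 0 ∧ b = 0)
  (p : X ⟶ DRobj R Y)
  (hp : ∀ (g : G) (n : SimplexCategoryᵒᵖ) (x : X.obj n), p.app n (A.act g n x) = p.app n x)
  (d : DistR R (SBorel A ⟶ Y))
  (hd : Theta R (SBorel A) Y d = tildeDist R A p hp)
  (t : SBorel A ⟶ Y) (ht : d.1 t ≠ 0)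

include hzsf hd ht in
lemma step_eq (k : ℕ) (x : X.obj (op ⦋k⦌)) (j : Fin (k + 1)) (F : Fin (k + 2) → G) :
    t.app (op ⦋k⦌) (Quot.mk _ (F ∘ (SimplexCategory.δ j.castSucc).toOrderHom, x))
      = t.app (op ⦋k⦌) (Quot.mk _ (F ∘ (SimplexCategory.δ j.succ).toOrderHom, x)) := by
  classical
  set m1 : SimplexCategoryᵒᵖ := op ⦋k + 1⦌ with hm1
  set z : X.obj m1 := X.map (SimplexCategory.σ j).op x with hz
  set Q : (SBorel A).obj m1 := Quot.mk _ (F, z) with hQdef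
  have h1 : (Theta R (SBorel A) Y d).app m1 Q = (tildeDist R A p hp).app m1 Q :=
    ConcreteCategory.congr_hom (congrArg (fun (F' : SBorel A ⟶ DRobj R Y) => F'.app m1) hd) Q
  have h2 : (tildeDist R A p hp).app m1 Q
      = DistR.map (Y.map (SimplexCategory.σ j).op) (p.app (op ⦋k⦌) x) := by
    show p.app m1 (X.map (SimplexCategory.σ j).op x) = _
    exact ConcreteCategory.congr_hom (p.naturality (SimplexCategory.σ j).op) x
  have h3 : t.app m1 Q ∈
      (Finsupp.mapDomain (Y.map (SimplexCategory.σ j).op) (p.app (op ⦋k⦌) x).1).support := by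
    have hmem : t.app m1 Q ∈ ((Theta R (SBorel A) Y d).app m1 Q).1.support :=
      Finsupp.mem_support_iff.mpr
        (zsf_mapDomain_ne_zero hzsf (fun s : SBorel A ⟶ Y => s.app m1 Q) d.1 t ht)
    rw [h1, h2] at hmem
    exact hmem
  obtain ⟨u, hu, huv⟩ := Finset.mem_image.mp (Finsupp.mapDomain_support h3)
  have hQ : t.app m1 Q = Y.map (SimplexCategory.σ j).op u := huv.symm
  have face : ∀ (i : Fin (k + 2)), SimplexCategory.δ i ≫ SimplexCategory.σ j = 𝟙 _ →
      t.app (op ⦋k⦌) (Quot.mk _ (F ∘ (SimplexCategory.δ i).toOrderHom, x)) = u := by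
    intro i hi
    have hnat : t.app (op ⦋k⦌) ((SBorel A).map (SimplexCategory.δ i).op Q)
        = Y.map (SimplexCategory.δ i).op (t.app m1 Q) :=
      ConcreteCategory.congr_hom (t.naturality (SimplexCategory.δ i).op) Q
    have hmap : (SBorel A).map (SimplexCategory.δ i).op Q
        = Quot.mk _ (F ∘ (SimplexCategory.δ i).toOrderHom, x) := by
      show Quot.mk _ (F ∘ (SimplexCategory.δ i).toOrderHom,
        X.map (SimplexCategory.δ i).op z) = _
      refine congrArg (Quot.mk _) (Prod.ext rfl ?_)
      show X.map (SimplexCategory.δ i).op (X.map (SimplexCategory.σ j).op x) = x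
      rw [← FunctorToTypes.map_comp_apply, ← op_comp, hi, op_id, FunctorToTypes.map_id_apply]
    rw [hmap] at hnat
    rw [hnat, hQ, ← FunctorToTypes.map_comp_apply, ← op_comp, hi, op_id,
      FunctorToTypes.map_id_apply]
  rw [face j.castSucc SimplexCategory.δ_comp_σ_self, face j.succ SimplexCategory.δ_comp_σ_succ]

include hzsf hd ht in
lemma update_eq (k : ℕ) (x : X.obj (op ⦋k⦌)) (j : Fin (k + 1)) (f f' : Fin (k + 1) → G)
    (hff : ∀ m, m ≠ j → f m = f' m) :
    t.app (op ⦋k⦌) (Quot.mk _ (f, x)) = t.app (op ⦋k⦌) (Quot.mk _ (f', x)) := by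
  classical
  set F : Fin (k + 2) → G := fun m =>
    if h : (m : ℕ) ≤ (j : ℕ) then f' ⟨(m : ℕ), Nat.lt_of_le_of_lt h j.isLt⟩
    else f ⟨(m : ℕ) - 1, by omega⟩ with hF
  have hc : F ∘ (SimplexCategory.δ j.castSucc).toOrderHom = f := by
    funext m
    show F (Fin.succAbove j.castSucc m) = f m
    rcases lt_or_ge (m : ℕ) (j : ℕ) with hlt | hge
    · have hstep : Fin.castSucc m < Fin.castSucc j := by
        simp only [Fin.lt_def, Fin.coe_castSucc]; exact hlt
      rw [Fin.succAbove_of_castSucc_lt _ _ hstep]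
      have hle : (m.castSucc : ℕ) ≤ (j : ℕ) := by simp only [Fin.coe_castSucc]; omega
      rw [hF]; dsimp only
      rw [dif_pos hle]
      have hmne : m ≠ j := by intro h; subst h; exact absurd hlt (lt_irrefl _)
      rw [hff m hmne]
      exact congrArg f' (Fin.ext (by simp))
    · have hstep : Fin.castSucc j ≤ Fin.castSucc m := by
        simp only [Fin.le_def, Fin.coe_castSucc]; exact hge
      rw [Fin.succAbove_of_le_castSucc _ _ hstep]
      have hle : ¬ (m.succ : ℕ) ≤ (j : ℕ) := by simp only [Fin.val_succ]; omega
      rw [hF]; dsimp only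
      rw [dif_neg hle]
      exact congrArg f (Fin.ext (by simp))
  have hs : F ∘ (SimplexCategory.δ j.succ).toOrderHom = f' := by
    funext m
    show F (Fin.succAbove j.succ m) = f' m
    rcases lt_or_ge (m : ℕ) ((j : ℕ) + 1) with hlt | hge
    · have hstep : Fin.castSucc m < Fin.succ j := by
        simp only [Fin.lt_def, Fin.coe_castSucc, Fin.val_succ]; omega
      rw [Fin.succAbove_of_castSucc_lt _ _ hstep]
      have hle : (m.castSucc : ℕ) ≤ (j : ℕ) := by simp only [Fin.coe_castSucc]; omega
      rw [hF]; dsimp only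
      rw [dif_pos hle]
      exact congrArg f' (Fin.ext (by simp))
    · have hstep : Fin.succ j ≤ Fin.castSucc m := by
        simp only [Fin.le_def, Fin.coe_castSucc, Fin.val_succ]; omega
      rw [Fin.succAbove_of_le_castSucc _ _ hstep]
      have hle : ¬ (m.succ : ℕ) ≤ (j : ℕ) := by simp only [Fin.val_succ]; omega
      rw [hF]; dsimp only
      rw [dif_neg hle]
      have hmj : m ≠ j := by intro h; subst h; omega
      rw [← hff m hmj]
      exact congrArg f (Fin.ext (by simp))
  have := step_eq A hzsf p hp d hd t ht k x j F
  rw [hc, hs] at this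
  exact this

include hzsf hd ht in
lemma const_eq (k : ℕ) (x : X.obj (op ⦋k⦌)) (f : Fin (k + 1) → G) :
    t.app (op ⦋k⦌) (Quot.mk _ (f, x))
      = t.app (op ⦋k⦌) (Quot.mk _ (fun _ => (1 : G), x)) := by
  classical
  have aux : ∀ j : ℕ, ∀ f : Fin (k + 1) → G, (∀ m : Fin (k + 1), (j : ℕ) ≤ (m : ℕ) → f m = 1) →
      t.app (op ⦋k⦌) (Quot.mk _ (f, x))
        = t.app (op ⦋k⦌) (Quot.mk _ (fun _ => (1 : G), x)) := by
    intro j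
    induction j with
    | zero =>
      intro f hf
      have : f = fun _ => (1 : G) := funext fun m => hf m (Nat.zero_le _)
      rw [this]
      try rfl
    | succ j ih =>
      intro f hf
      by_cases hj : j < k + 1
      · set jf : Fin (k + 1) := ⟨j, hj⟩ with hjf
        have h1 := update_eq A hzsf p hp d hd t ht k x jf f (Function.update f jf 1)
          (fun m hm => (Function.update_of_ne hm _ _).symm)
        rw [h1]
        apply ih
        intro m hm
        by_cases hmj : m = jf
        · subst hmj; exact Function.update_self _ _ _
        · have hne : (m : ℕ) ≠ j := by
            intro h; exact hmj (Fin.ext (by simp [hjf, h]))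
          rw [Function.update_of_ne hmj]
          exact hf m (by omega)
      · exact ih f (fun m hm => absurd (lt_of_le_of_lt hm m.isLt) (by omega))
  exact aux (k + 1) f (fun m hm => absurd (lt_of_le_of_lt hm m.isLt) (by omega))

include hzsf hd ht in
lemma restrict_equivariant :
    ∀ (g : G) (n : SimplexCategoryᵒᵖ) (x : X.obj n),
      t.app n ((iotaB A).app n (A.act g n x)) = t.app n ((iotaB A).app n x) := by
  intro g n x
  obtain ⟨m⟩ := n
  obtain ⟨k, rfl⟩ : ∃ k, SimplexCategory.mk k = m := ⟨m.len, SimplexCategory.mk_len m⟩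
  show t.app (op (SimplexCategory.mk k))
      (Quot.mk (sBorelRel A (op (SimplexCategory.mk k)))
        ((fun _ => (1 : G)), A.act g (op (SimplexCategory.mk k)) x))
    = t.app (op (SimplexCategory.mk k))
      (Quot.mk (sBorelRel A (op (SimplexCategory.mk k))) ((fun _ => (1 : G)), x))
  have hq : Quot.mk (sBorelRel A (op (SimplexCategory.mk k)))
        ((fun _ => (1 : G)), A.act g (op (SimplexCategory.mk k)) x)
      = Quot.mk (sBorelRel A (op (SimplexCategory.mk k))) ((fun _ => g⁻¹), x) := by
    apply Quot.sound
    refine ⟨g⁻¹, funext fun i => mul_one g⁻¹, ?_⟩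
    rw [← A.mul, inv_mul_cancel, A.one]
  rw [hq]
  exact const_eq A hzsf p hp d hd t ht k x _

end Converse

end AuxStmt6

/-- A `G`-equivariant simplicial distribution `p : X → D_R(Y)` (trivial action on `Y`) is
`G`-equivariantly non-contextual (it is `Θ_G` of a distribution on the set of
`G`-equivariant deterministic distributions) if and only if the induced simplicial
distribution `p̃_G : X ⫽ G → D_R(Y)` on the Borel construction is non-contextual. -/
theorem stmt6 (R : Type) [CommSemiring R]
    (hzsf : ∀ a b : R, a + b = 0 → a = 0 ∧ b = 0)
    (G : Type) [Group G] (X Y : SSet.{0}) (A : SAct G X)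
    (p : X ⟶ DRobj R Y)
    (hp : ∀ (g : G) (n : SimplexCategoryᵒᵖ) (x : X.obj n), p.app n (A.act g n x) = p.app n x) :
    (∃ d : DistR R {s : X ⟶ Y //
        ∀ (g : G) (n : SimplexCategoryᵒᵖ) (x : X.obj n), s.app n (A.act g n x) = s.app n x},
      Theta R X Y (DistR.map Subtype.val d) = p)
    ↔ (∃ d : DistR R (SBorel A ⟶ Y), Theta R (SBorel A) Y d = tildeDist R A p hp) := by
  constructor
  · rintro ⟨d, hd⟩
    refine ⟨DistR.map (fun s => tildeMap A s.1 s.2) d, ?_⟩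
    apply NatTrans.ext
    funext n; ext q
    induction q using Quot.ind with
    | _ a =>
      show DistR.map (fun t : SBorel A ⟶ Y => t.app n (Quot.mk (sBorelRel A n) a))
          (DistR.map (fun s => tildeMap A s.1 s.2) d) = p.app n a.2
      rw [← DistR.map_comp]
      have he : ((fun t : SBorel A ⟶ Y => t.app n (Quot.mk (sBorelRel A n) a))
            ∘ (fun s : {s : X ⟶ Y // ∀ (g : G) (n : SimplexCategoryᵒᵖ) (x : X.obj n),
                s.app n (A.act g n x) = s.app n x} => tildeMap A s.1 s.2))
          = ((fun s : X ⟶ Y => s.app n a.2) ∘ Subtype.val) := rfl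
      rw [he, DistR.map_comp]
      exact ConcreteCategory.congr_hom (congrArg (fun (F : X ⟶ DRobj R Y) => F.app n) hd) a.2
  · rintro ⟨d, hd⟩
    classical
    by_cases h10 : (1 : R) = 0
    · haveI : Subsingleton R := subsingleton_of_zero_eq_one h10.symm
      refine ⟨⟨0, by rw [Finsupp.sum_zero_index]; exact h10.symm⟩, ?_⟩
      apply NatTrans.ext
      funext n; ext x
      apply Subtype.ext
      apply Finsupp.ext
      intro y
      exact Subsingleton.elim _ _
    · have hdne : d.1 ≠ 0 := by
        intro h
        apply h10
        have h2 := d.2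
        rw [h, Finsupp.sum_zero_index] at h2
        exact h2.symm
      obtain ⟨t0, ht0⟩ := Finsupp.support_nonempty_iff.mpr hdne
      have ht0' : d.1 t0 ≠ 0 := Finsupp.mem_support_iff.mp ht0
      have hE : ∀ t' : SBorel A ⟶ Y, d.1 t' ≠ 0 →
          ∀ (g : G) (n : SimplexCategoryᵒᵖ) (x : X.obj n),
            (iotaB A ≫ t').app n (A.act g n x) = (iotaB A ≫ t').app n x := by
        intro t' ht' g n x
        exact restrict_equivariant A hzsf p hp d hd t' ht' g n x
      set Φ : (SBorel A ⟶ Y) → {s : X ⟶ Y // ∀ (g : G) (n : SimplexCategoryᵒᵖ) (x : X.obj n),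
          s.app n (A.act g n x) = s.app n x} :=
        fun t' => if h : ∀ (g : G) (n : SimplexCategoryᵒᵖ) (x : X.obj n),
            (iotaB A ≫ t').app n (A.act g n x) = (iotaB A ≫ t').app n x
          then ⟨iotaB A ≫ t', h⟩ else ⟨iotaB A ≫ t0, hE t0 ht0'⟩ with hΦ
      refine ⟨DistR.map Φ d, ?_⟩
      apply NatTrans.ext
      funext n; ext x
      apply Subtype.ext
      show Finsupp.mapDomain (fun s : X ⟶ Y => s.app n x)
          (Finsupp.mapDomain Subtype.val (Finsupp.mapDomain Φ d.1)) = (p.app n x).1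
      rw [← Finsupp.mapDomain_comp, ← Finsupp.mapDomain_comp]
      have hcg : ∀ t' ∈ d.1.support,
          (((fun s : X ⟶ Y => s.app n x) ∘ Subtype.val) ∘ Φ) t'
            = (fun t' : SBorel A ⟶ Y => t'.app n ((iotaB A).app n x)) t' := by
        intro t' ht'
        have h' := hE t' (Finsupp.mem_support_iff.mp ht')
        show ((Φ t' : {s : X ⟶ Y // _}) : X ⟶ Y).app n x = t'.app n ((iotaB A).app n x)
        rw [hΦ]
        dsimp only
        rw [dif_pos h']
        rfl
      rw [Finsupp.mapDomain_congr hcg]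
      exact congrArg Subtype.val
        (ConcreteCategory.congr_hom (congrArg (fun (F : SBorel A ⟶ DRobj R Y) => F.app n) hd)
          ((iotaB A).app n x))
end

section
/- Let Z ⊆ X be a simplicial subset with cofiber X̄ = X/Z, and let A be an abelian group. A simplicial set map r : Z → NA extends to a simplicial set map X → NA if and only if the image ζ([r]) of its cohomology class under the connecting homomorphism ζ : H¹(Z, A) → H²(X̄, A) of the long exact sequence of the cofibration is zero. -/
open CategoryTheory Simplicial Opposite

section aux

variable {X Z : SSet.{0}} (ι : Z ⟶ X)

lemma ι_δ {n : ℕ} (i : Fin (n + 2)) (z : Z _⦋n + 1⦌) :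
    ι.app (op ⦋n⦌) (Z.δ i z) = X.δ i (ι.app (op ⦋n + 1⦌) z) :=
  FunctorToTypes.naturality (F := Z) (G := X) (φ := ι) (f := (SimplexCategory.δ i).op) (x := z)

lemma ι_σ {n : ℕ} (i : Fin (n + 1)) (z : Z _⦋n⦌) :
    ι.app (op ⦋n + 1⦌) (Z.σ i z) = X.σ i (ι.app (op ⦋n⦌) z) :=
  FunctorToTypes.naturality (F := Z) (G := X) (φ := ι) (f := (SimplexCategory.σ i).op) (x := z)

end aux

set_option maxHeartbeats 1000000 in
/-- Let `Z ⊆ X` be a simplicial subset (an inclusion `ι : Z → X`) with cofiber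
`X̄ = X/Z`, and `A` an abelian group.  A simplicial set map `r : Z → NA` — encoded,
via the nerve, by a normalized 1-cocycle `r : Z₁ → A` — extends to a simplicial set map
`X → NA` if and only if the image `ζ([r])` of its class under the connecting
homomorphism `ζ : H¹(Z, A) → H²(X̄, A)` vanishes; concretely, `ζ(r)` is the coboundary
of the extension-by-zero `r̃` of `r`, and `ζ([r]) = 0` iff it is the coboundary of a
relative 1-cochain `u` (one vanishing on `Z₁`). -/
theorem stmt12 (A : Type) [AddCommGroup A] (X Z : SSet.{0}) (ι : Z ⟶ X)
    (hinj : ∀ n : SimplexCategoryᵒᵖ, Function.Injective (ι.app n))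
    (r : Z _⦋1⦌ → A)
    (hrn : ∀ z : Z _⦋0⦌, r (Z.σ 0 z) = 0)
    (hrc : ∀ σ : Z _⦋2⦌, r (Z.δ 1 σ) = r (Z.δ 2 σ) + r (Z.δ 0 σ)) :
    (∃ f : X _⦋1⦌ → A,
        (∀ x : X _⦋0⦌, f (X.σ 0 x) = 0) ∧
        (∀ σ : X _⦋2⦌, f (X.δ 1 σ) = f (X.δ 2 σ) + f (X.δ 0 σ)) ∧
        (∀ z : Z _⦋1⦌, f (ι.app (op ⦋1⦌) z) = r z))
    ↔ (∃ u : X _⦋1⦌ → A,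
        (∀ z : Z _⦋1⦌, u (ι.app (op ⦋1⦌) z) = 0) ∧
        (∀ σ : X _⦋2⦌,
          Function.extend (ι.app (op ⦋1⦌)) r (fun _ => 0) (X.δ 1 σ)
            - Function.extend (ι.app (op ⦋1⦌)) r (fun _ => 0) (X.δ 2 σ)
            - Function.extend (ι.app (op ⦋1⦌)) r (fun _ => 0) (X.δ 0 σ)
          = u (X.δ 1 σ) - u (X.δ 2 σ) - u (X.δ 0 σ))) := by
  set rt : X _⦋1⦌ → A := Function.extend (ι.app (op ⦋1⦌)) r (fun _ => 0) with hrt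
  have hext : ∀ z : Z _⦋1⦌, rt (ι.app (op ⦋1⦌) z) = r z := fun z =>
    Function.Injective.extend_apply (hinj _) r _ z
  -- rt vanishes on degenerate edges
  have hrt0 : ∀ x : X _⦋0⦌, rt (X.σ 0 x) = 0 := by
    intro x
    by_cases h : ∃ z : Z _⦋1⦌, ι.app (op ⦋1⦌) z = X.σ 0 x
    · obtain ⟨z, hz⟩ := h
      have hx : x = ι.app (op ⦋0⦌) (Z.δ 0 z) := by
        rw [ι_δ, hz]
        exact (SSet.δ_comp_σ_self'_apply (by decide) x).symm
      have hz' : z = Z.σ 0 (Z.δ 0 z) := by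
        apply hinj (op ⦋1⦌)
        rw [hz, ι_σ, ← hx]
      rw [← hz, hext, hz', hrn]
    · rw [hrt, Function.extend_apply' _ _ _ h]
  constructor
  · rintro ⟨f, hfn, hfc, hfr⟩
    refine ⟨fun e => rt e - f e, fun z => ?_, fun σ => ?_⟩
    · show rt (ι.app (op ⦋1⦌) z) - f (ι.app (op ⦋1⦌) z) = 0
      rw [hext, hfr, sub_self]
    show rt (X.δ 1 σ) - rt (X.δ 2 σ) - rt (X.δ 0 σ) =
        (rt (X.δ 1 σ) - f (X.δ 1 σ)) - (rt (X.δ 2 σ) - f (X.δ 2 σ))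
          - (rt (X.δ 0 σ) - f (X.δ 0 σ))
    rw [hfc σ]
    abel
  · rintro ⟨u, hu0, huc⟩
    -- u vanishes on degenerate edges
    have hud : ∀ x : X _⦋0⦌, u (X.σ 0 x) = 0 := by
      intro x
      have this := huc (X.σ 0 (X.σ 0 x))
      have h0 : X.δ (0 : Fin 3) (X.σ 0 (X.σ 0 x)) = X.σ 0 x :=
        SSet.δ_comp_σ_self'_apply (by decide) _
      have h1 : X.δ (1 : Fin 3) (X.σ 0 (X.σ 0 x)) = X.σ 0 x :=
        SSet.δ_comp_σ_succ'_apply (by decide) _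
      have h2 : X.δ (2 : Fin 3) (X.σ 0 (X.σ 0 x)) = X.σ 0 x := by
        rw [show (2 : Fin 3) = ((1 : Fin 2)).succ from by decide,
          show (0 : Fin 2) = Fin.castSucc (0 : Fin 1) from by decide,
          SSet.δ_comp_σ_of_gt_apply (by decide),
          SSet.δ_comp_σ_succ'_apply (by decide)]
      rw [h0, h1, h2, hrt0] at this
      rw [show (0:A) - 0 - 0 = 0 from by abel,
        show u (X.σ 0 x) - u (X.σ 0 x) - u (X.σ 0 x) = -u (X.σ 0 x) from by abel,
        eq_comm, neg_eq_zero] at this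
      exact this
    refine ⟨fun e => rt e - u e, fun x => ?_, fun σ => ?_, ?_⟩
    · show rt (X.σ 0 x) - u (X.σ 0 x) = 0
      rw [hrt0, hud, sub_self]
    · have := huc σ
      show rt (X.δ 1 σ) - u (X.δ 1 σ) =
          (rt (X.δ 2 σ) - u (X.δ 2 σ)) + (rt (X.δ 0 σ) - u (X.δ 0 σ))
      calc rt (X.δ 1 σ) - u (X.δ 1 σ)
          = ((rt (X.δ 1 σ) - rt (X.δ 2 σ) - rt (X.δ 0 σ))
              - (u (X.δ 1 σ) - u (X.δ 2 σ) - u (X.δ 0 σ)))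
            + ((rt (X.δ 2 σ) - u (X.δ 2 σ)) + (rt (X.δ 0 σ) - u (X.δ 0 σ))) := by abel
        _ = (rt (X.δ 2 σ) - u (X.δ 2 σ)) + (rt (X.δ 0 σ) - u (X.δ 0 σ)) := by
            rw [this, sub_self, zero_add]
    · intro z
      show rt (ι.app (op ⦋1⦌) z) - u (ι.app (op ⦋1⦌) z) = r z
      rw [hext, hu0, sub_zero]
end

section
/- For a central extension NA → NA ×_β M → M of partial groups classified by a 2-cocycle β : M₂ → A, the following are equivalent: (1) the cohomology class [β] ∈ H²(M, A) is zero; (2) the fiber inclusion i : NA → NA ×_β M admits a retraction; (3) the projection π : NA ×_β M → M admits a simplicial section. -/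
open CategoryTheory Simplicial Opposite

/-- For a central partial group extension `NA → NA ×_β M → M` of a partial group `M`
(a reduced simplicial set) by a finite abelian group `A`, classified by a normalized
2-cocycle `β : M₂ → A`, the following are equivalent:
(1) `[β] = 0` in `H²(M, A)`, i.e. `β` is the coboundary of a normalized 1-cochain;
(2) the fiber inclusion `i : NA → NA ×_β M` splits, i.e. there is a retraction — by the
determination of maps into nerves by their 1-simplices, a function
`r : A × M₁ → A` with `r(a, 1) = a` and `r(a₁ + a₂ + β σ, d₁σ) = r(a₁, d₂σ) + r(a₂, d₀σ)`;
(3) the projection `π : NA ×_β M → M` splits, i.e. there is a simplicial section — a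
normalized `s : M₁ → A` with `s(d₁σ) = s(d₂σ) + s(d₀σ) + β σ`. -/
theorem stmt15 (A : Type) [AddCommGroup A] [Fintype A] (M : SSet.{0})
    (pt : M _⦋0⦌) (hred : ∀ x : M _⦋0⦌, x = pt)
    (β : M _⦋2⦌ → A)
    (hβdeg : ∀ x : M _⦋1⦌, β (M.σ 0 x) = 0 ∧ β (M.σ 1 x) = 0)
    (hβcoc : ∀ τ : M _⦋3⦌, β (M.δ 1 τ) + β (M.δ 3 τ) = β (M.δ 0 τ) + β (M.δ 2 τ)) :
    ((∃ s : M _⦋1⦌ → A, s (M.σ 0 pt) = 0 ∧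
        ∀ σ : M _⦋2⦌, β σ = s (M.δ 2 σ) + s (M.δ 0 σ) - s (M.δ 1 σ))
      ↔ (∃ s : M _⦋1⦌ → A, s (M.σ 0 pt) = 0 ∧
        ∀ σ : M _⦋2⦌, s (M.δ 1 σ) = s (M.δ 2 σ) + s (M.δ 0 σ) + β σ)) ∧
    ((∃ r : A × M _⦋1⦌ → A,
        (∀ a : A, r (a, M.σ 0 pt) = a) ∧
        ∀ (a₁ a₂ : A) (σ : M _⦋2⦌),
          r (a₁ + a₂ + β σ, M.δ 1 σ) = r (a₁, M.δ 2 σ) + r (a₂, M.δ 0 σ))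
      ↔ (∃ s : M _⦋1⦌ → A, s (M.σ 0 pt) = 0 ∧
        ∀ σ : M _⦋2⦌, s (M.δ 1 σ) = s (M.δ 2 σ) + s (M.δ 0 σ) + β σ)) := by
  -- facts about the degenerate 2-simplex on a 1-simplex `x`
  have hd1 : ∀ x : M _⦋1⦌, M.δ 1 (M.σ 0 x) = x := fun x =>
    M.δ_comp_σ_succ'_apply (i := 0) (j := 1) rfl x
  have hd0 : ∀ x : M _⦋1⦌, M.δ 0 (M.σ 0 x) = x := fun x =>
    M.δ_comp_σ_self'_apply (i := 0) (j := 0) rfl x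
  have hd2 : ∀ x : M _⦋1⦌, M.δ 2 (M.σ 0 x) = M.σ 0 pt := by
    intro x
    have h := M.δ_comp_σ_of_gt_apply (n := 0) (i := 1) (j := 0) (by decide) x
    have h2 : M.δ (1 : Fin 2) x = pt := hred _
    simpa [h2] using h
  constructor
  · -- (1) ↔ (3)
    constructor
    · rintro ⟨s, hs0, hs⟩
      refine ⟨fun x => -s x, by simp [hs0], fun σ => ?_⟩
      have := hs σ
      abel_nf
      linear_combination (norm := abel) -this
    · rintro ⟨s, hs0, hs⟩
      refine ⟨fun x => -s x, by simp [hs0], fun σ => ?_⟩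
      simp only
      rw [hs σ]
      abel
  · -- (2) ↔ (3)
    constructor
    · rintro ⟨r, hr1, hr2⟩
      -- r (a, x) = a + r (0, x)
      have key : ∀ (a : A) (x : M _⦋1⦌), r (a, x) = a + r (0, x) := by
        intro a x
        have := hr2 a 0 (M.σ 0 x)
        rw [hd1, hd0, hd2, (hβdeg x).1, hr1] at this
        simpa using this
      refine ⟨fun x => -r (0, x), ?_, fun σ => ?_⟩
      · have := hr1 (0 : A); simp [this]
      · have := hr2 0 0 σ
        rw [key (0 + 0 + β σ) (M.δ 1 σ)] at this
        have h3 : r (0, M.δ 1 σ) = r (0, M.δ 2 σ) + r (0, M.δ 0 σ) - β σ := by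
          rw [← this]; abel
        simp only
        rw [h3]
        abel
    · rintro ⟨s, hs0, hs⟩
      refine ⟨fun p => p.1 - s p.2, fun a => by simp [hs0], fun a₁ a₂ σ => ?_⟩
      simp only
      linear_combination (norm := abel) -hs σ
end

section
/- With notation as in the central extension NA → E →^π M with cocycle β, G-action giving Φ : G × M₁ → A, and pseudo-section η : M → E, η(x) = (0,x): there exists a function s : M₁ → A with d^h s = Φ (i.e., Φ_g(x) = s(g⁻¹·x) − s(x) up to coboundary) if and only if π admits a G-equivariant pseudo-section; moreover the cohomology class of Φ is independent of the choice of pseudo-section η. -/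
/-- Let `NA → E →^π M` be a central partial group extension with `E₁ = A × M₁` and
`π` the second projection, and let `G` act on `E` by automorphisms fixing `NA` and
commuting with the `NA`-action (so that the second coordinate of `g • (a, m)` is `g • m`
and the first coordinate is `a`-equivariant).  Pseudo-sections of `π` correspond to
functions `α : M₁ → A`, `λ_α(x) = (α x, x)`, and the associated cocycle is
`Φ^α_g(x) = (g·λ_α(g⁻¹·x))·λ_α(x)⁻¹ = fst(g • (α(g⁻¹·x), g⁻¹·x)) − α x`.  Then:
(1) the cohomology class of `Φ^α` is independent of the choice of pseudo-section (any two
differ by a horizontal coboundary), and (2) there is `s : M₁ → A` with `d^h s = Φ`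
(for the pseudo-section `η(x) = (0, x)`) if and only if `π` admits a `G`-equivariant
pseudo-section. -/
theorem stmt18 (G A M₁ : Type) [Group G] [AddCommGroup A] [MulAction G M₁]
    (act : G → A × M₁ → A × M₁)
    (hone : ∀ p : A × M₁, act 1 p = p)
    (hmul : ∀ (g h : G) (p : A × M₁), act (g * h) p = act g (act h p))
    (hsnd : ∀ (g : G) (a : A) (m : M₁), (act g (a, m)).2 = g • m)
    (hfst : ∀ (g : G) (a : A) (m : M₁), (act g (a, m)).1 = a + (act g (0, m)).1) :
    (∀ α₁ α₂ : M₁ → A, ∃ α : M₁ → A, ∀ (g : G) (x : M₁),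
        ((act g (α₂ (g⁻¹ • x), g⁻¹ • x)).1 - α₂ x)
          = ((act g (α₁ (g⁻¹ • x), g⁻¹ • x)).1 - α₁ x) + (α (g⁻¹ • x) - α x)) ∧
    ((∃ s : M₁ → A, ∀ (g : G) (x : M₁),
        (act g ((0 : A), g⁻¹ • x)).1 = s (g⁻¹ • x) - s x)
      ↔ (∃ α : M₁ → A, ∀ (g : G) (x : M₁),
          act g (α (g⁻¹ • x), g⁻¹ • x) = (α x, x))) := by
  refine ⟨fun α₁ α₂ => ⟨fun m => α₂ m - α₁ m, fun g x => by
    rw [hfst g (α₂ _), hfst g (α₁ _)]; beta_reduce; abel⟩, ?_, ?_⟩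
  · rintro ⟨s, hs⟩
    refine ⟨fun m => -s m, fun g x => ?_⟩
    have h2 : (act g (-s (g⁻¹ • x), g⁻¹ • x)).2 = x := by
      rw [hsnd, smul_inv_smul]
    have h1 : (act g (-s (g⁻¹ • x), g⁻¹ • x)).1 = -s x := by
      rw [hfst, hs]; abel
    exact Prod.ext h1 h2
  · rintro ⟨α, hα⟩
    refine ⟨fun m => -α m, fun g x => ?_⟩
    have := congrArg Prod.fst (hα g x)
    rw [hfst] at this
    simp only at this
    beta_reduce
    linear_combination (norm := abel) this
end
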